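/- arXiv:1711.04888 — 6 statements merged into one kernel-verified Lean document; each statement's English description precedes it below -/
import Mathlib

section
/- Let Ω be a bounded domain with periodic boundary conditions, V ∈ L^∞(Ω) nonnegative, and let u solve -Δu + Vu = 1 (the landscape function). If ψ is an eigenfunction of H = -Δ + V with eigenvalue λ, then for almost every x ∈ Ω, |ψ(x)| ≤ λ u(x) ‖ψ‖_{L^∞}. -/
open MeasureTheory

noncomputable section

/-- The `i`-th coordinate unit vector in `ℝⁿ`. -/
def eVec (n : ℕ) (i : Fin n) : EuclideanSpace ℝ (Fin n) := EuclideanSpace.single i 1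

/-- Periodicity with respect to the unit lattice `ℤⁿ` (torus boundary conditions). -/
def per {n : ℕ} (f : EuclideanSpace ℝ (Fin n) → ℝ) : Prop :=
  ∀ (x : EuclideanSpace ℝ (Fin n)) (i : Fin n), f (x + eVec n i) = f x

/-- A fundamental domain `Q = [0,1)ⁿ` of the torus. -/
def Qd (n : ℕ) : Set (EuclideanSpace ℝ (Fin n)) :=
  {x | ∀ i, x i ∈ Set.Ico (0:ℝ) 1}

/-- The Laplacian `Δf = ∑ᵢ ∂²f/∂xᵢ²`. -/
def lap {n : ℕ} (f : EuclideanSpace ℝ (Fin n) → ℝ) (x : EuclideanSpace ℝ (Fin n)) : ℝ :=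
  ∑ i, fderiv ℝ (fun y => fderiv ℝ f y (eVec n i)) x (eVec n i)

lemma per_zsmul {n : ℕ} {f : EuclideanSpace ℝ (Fin n) → ℝ} (hf : per f) (i : Fin n)
    (m : ℤ) (x : EuclideanSpace ℝ (Fin n)) : f (x + m • eVec n i) = f x := by
  induction m using Int.induction_on with
  | zero => simp
  | succ k ih =>
      have : x + ((k : ℤ) + 1) • eVec n i = (x + (k : ℤ) • eVec n i) + eVec n i := by
        module
      rw [this, hf, ih]
  | pred k ih =>
      have : x + (-(k : ℤ) - 1) • eVec n i + eVec n i = x + (-(k : ℤ)) • eVec n i := by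
        module
      rw [← ih, ← this, hf]

lemma per_sum {n : ℕ} {f : EuclideanSpace ℝ (Fin n) → ℝ} (hf : per f)
    (m : Fin n → ℤ) (x : EuclideanSpace ℝ (Fin n)) :
    f (x + ∑ i, m i • eVec n i) = f x := by
  classical
  have key : ∀ (s : Finset (Fin n)), f (x + ∑ i ∈ s, m i • eVec n i) = f x := by
    intro s
    induction s using Finset.induction_on with
    | empty => simp
    | insert _ _ hns ih =>
        rename_i a s
        rw [Finset.sum_insert hns]
        have : x + (m a • eVec n a + ∑ i ∈ s, m i • eVec n i)
            = (x + ∑ i ∈ s, m i • eVec n i) + m a • eVec n a := by module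
        rw [this, per_zsmul hf, ih]
  exact key Finset.univ

lemma eVec_apply {n : ℕ} (i j : Fin n) : eVec n i j = if j = i then 1 else 0 := by
  simp [eVec, EuclideanSpace.single_apply]

/-- A continuous periodic function attains its global minimum. -/
lemma per_min {n : ℕ} {f : EuclideanSpace ℝ (Fin n) → ℝ} (hf : per f)
    (hc : Continuous f) : ∃ x₀, ∀ x, f x₀ ≤ f x := by
  classical
  set K : Set (EuclideanSpace ℝ (Fin n)) := {x | ∀ i, x i ∈ Set.Icc (0:ℝ) 1} with hK
  have hKeq : K = (⇑(EuclideanSpace.equiv (Fin n) ℝ)) ⁻¹' (Set.univ.pi fun _ => Set.Icc (0:ℝ) 1) := by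
    ext x
    simp only [Set.mem_preimage, Set.mem_univ_pi, hK, Set.mem_setOf_eq]
    rfl
  have hKcomp : IsCompact K := by
    rw [hKeq]
    exact ((EuclideanSpace.equiv (Fin n) ℝ).toHomeomorph.isCompact_preimage).2
      (isCompact_univ_pi fun _ => isCompact_Icc)
  have hKne : (0 : EuclideanSpace ℝ (Fin n)) ∈ K := by
    intro i; simp
  obtain ⟨x₀, hx₀K, hmin⟩ := hKcomp.exists_isMinOn ⟨0, hKne⟩ hc.continuousOn
  refine ⟨x₀, fun x => ?_⟩
  set y : EuclideanSpace ℝ (Fin n) := x + ∑ i, (-⌊x i⌋) • eVec n i with hy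
  have hyK : y ∈ K := by
    intro j
    have hcoord : y j = x j - ⌊x j⌋ := by
      have h1 : (EuclideanSpace.proj j : EuclideanSpace ℝ (Fin n) →L[ℝ] ℝ) y
          = x j - ⌊x j⌋ := by
        rw [hy, map_add, map_sum]
        have h2 : ∀ i : Fin n, (EuclideanSpace.proj j : EuclideanSpace ℝ (Fin n) →L[ℝ] ℝ)
            ((-⌊x i⌋ : ℤ) • eVec n i) = (-⌊x i⌋ : ℤ) • (if i = j then (1:ℝ) else 0) := by
          intro i
          rw [map_zsmul]
          congr 1
          simpa [eq_comm] using eVec_apply i j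
        have h3 : ∀ i : Fin n, ((-⌊x i⌋ : ℤ) • if i = j then (1:ℝ) else 0)
            = if i = j then (-⌊x j⌋ : ℝ) else 0 := by
          intro i
          by_cases h : i = j
          · subst h; simp
          · simp [h]
        rw [Finset.sum_congr rfl fun i _ => h2 i, Finset.sum_congr rfl fun i _ => h3 i,
          Finset.sum_ite_eq' Finset.univ j (fun _ => (-⌊x j⌋ : ℝ))]
        have h4 : (EuclideanSpace.proj j : EuclideanSpace ℝ (Fin n) →L[ℝ] ℝ) x = x j := rfl
        rw [h4]
        simp only [Finset.mem_univ, if_true]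
        ring
      simpa using h1
    rw [hcoord]
    constructor
    · linarith [Int.floor_le (x j)]
    · linarith [Int.lt_floor_add_one (x j)]
  have hfy : f y = f x := per_sum hf _ x
  calc f x₀ ≤ f y := hmin hyK
    _ = f x := hfy

/-- At a global minimum of a `C²` function, all second directional derivatives are
nonnegative. -/
lemma second_deriv_nonneg {n : ℕ} {f : EuclideanSpace ℝ (Fin n) → ℝ}
    (hf : ContDiff ℝ 2 f) {x₁ : EuclideanSpace ℝ (Fin n)}
    (hmin : ∀ x, f x₁ ≤ f x) (v : EuclideanSpace ℝ (Fin n)) :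
    0 ≤ fderiv ℝ (fun y => fderiv ℝ f y v) x₁ v := by
  classical
  set L : ℝ → EuclideanSpace ℝ (Fin n) := fun t => x₁ + t • v with hL
  have hLd : ∀ t : ℝ, HasDerivAt L v t := by
    intro t
    simpa [hL] using ((hasDerivAt_id t).smul_const v).const_add x₁
  have hfd : Differentiable ℝ f := hf.differentiable two_ne_zero
  have hF : ContDiff ℝ 1 (fun y => fderiv ℝ f y v) :=
    (hf.fderiv_right (le_refl _)).clm_apply contDiff_const
  set g : ℝ → ℝ := fun t => f (L t) with hg
  have hg' : ∀ t, HasDerivAt g (fderiv ℝ f (L t) v) t := by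
    intro t
    exact (hfd (L t)).hasFDerivAt.comp_hasDerivAt t (hLd t)
  have hgderiv : deriv g = fun t => fderiv ℝ f (L t) v := by
    funext t; exact (hg' t).deriv
  set D : ℝ := fderiv ℝ (fun y => fderiv ℝ f y v) x₁ v with hD
  have hh' : HasDerivAt (fun t => fderiv ℝ f (L t) v) D 0 := by
    have := ((hF.differentiable one_ne_zero) (L 0)).hasFDerivAt.comp_hasDerivAt 0 (hLd 0)
    simpa [hL, hD, Function.comp_def] using this
  by_contra hDneg
  push_neg at hDneg
  have hgmin : IsLocalMin g 0 := by
    apply Filter.Eventually.of_forall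
    intro t
    simpa [hg, hL] using hmin (L t)
  have hg0 : fderiv ℝ f (L 0) v = 0 := by
    have := hgmin.deriv_eq_zero
    rw [hgderiv] at this
    exact this
  set h : ℝ → ℝ := fun t => fderiv ℝ f (L t) v with hh
  have hslope : Filter.Tendsto (slope h 0) (nhdsWithin 0 {0}ᶜ) (nhds D) :=
    hasDerivAt_iff_tendsto_slope.1 hh'
  have hev : ∀ᶠ t in nhdsWithin 0 {0}ᶜ, slope h 0 t < 0 :=
    hslope (Iio_mem_nhds hDneg)
  have hev' : ∀ᶠ t in nhdsWithin 0 (Set.Ioi 0), slope h 0 t < 0 :=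
    hev.filter_mono (nhdsWithin_mono 0 (fun t ht => by
      simp only [Set.mem_compl_iff, Set.mem_singleton_iff]
      exact ne_of_gt ht))
  obtain ⟨w, hw0, hwss⟩ := (mem_nhdsGT_iff_exists_Ioo_subset).1 hev'
  have hw0' : (0:ℝ) < w := hw0
  have hneg : ∀ t ∈ Set.Ioo (0:ℝ) w, deriv g t < 0 := by
    intro t ht
    have hs : slope h 0 t < 0 := hwss ht
    rw [slope_def_field] at hs
    have hdiv : h t / t < 0 := by simpa [hg0, hh] using hs
    have ht0 : 0 < t := ht.1
    have hht : h t < 0 := by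
      rcases div_neg_iff.1 hdiv with ⟨_, h2⟩ | ⟨h1, _⟩
      · linarith
      · exact h1
    rw [hgderiv]; exact hht
  have hcont : ContinuousOn g (Set.Icc 0 w) :=
    (hf.continuous.comp (by continuity : Continuous L)).continuousOn
  have hanti : StrictAntiOn g (Set.Icc 0 w) := by
    apply strictAntiOn_of_deriv_neg (convex_Icc 0 w) hcont
    intro t ht
    rw [interior_Icc] at ht
    exact hneg t ht
  have h5 : g w < g 0 := hanti (Set.left_mem_Icc.2 hw0'.le) (Set.right_mem_Icc.2 hw0'.le) hw0'
  have h6 : f x₁ ≤ g w := hmin (L w)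
  have h7 : g 0 = f x₁ := by simp [hg, hL]
  linarith

lemma fderiv_comb {n : ℕ} (f g : EuclideanSpace ℝ (Fin n) → ℝ) (a b : ℝ)
    (hf : Differentiable ℝ f) (hg : Differentiable ℝ g)
    (y v : EuclideanSpace ℝ (Fin n)) :
    fderiv ℝ (fun z => a * f z + b * g z) y v
      = a * fderiv ℝ f y v + b * fderiv ℝ g y v := by
  rw [fderiv_fun_add ((hf y).const_mul a) ((hg y).const_mul b),
    fderiv_const_mul (hf y), fderiv_const_mul (hg y)]
  simp

lemma lap_comb {n : ℕ} {f g : EuclideanSpace ℝ (Fin n) → ℝ}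
    (hf : ContDiff ℝ 2 f) (hg : ContDiff ℝ 2 g) (a b : ℝ)
    (x : EuclideanSpace ℝ (Fin n)) :
    lap (fun z => a * f z + b * g z) x = a * lap f x + b * lap g x := by
  have hfd : Differentiable ℝ f := hf.differentiable two_ne_zero
  have hgd : Differentiable ℝ g := hg.differentiable two_ne_zero
  have hFf : ∀ w, Differentiable ℝ (fun y => fderiv ℝ f y w) := fun w =>
    ((hf.fderiv_right (le_refl _)).clm_apply contDiff_const).differentiable one_ne_zero
  have hFg : ∀ w, Differentiable ℝ (fun y => fderiv ℝ g y w) := fun w =>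
    ((hg.fderiv_right (le_refl _)).clm_apply contDiff_const).differentiable one_ne_zero
  unfold lap
  rw [Finset.mul_sum, Finset.mul_sum, ← Finset.sum_add_distrib]
  refine Finset.sum_congr rfl fun i _ => ?_
  have h1 : (fun y => fderiv ℝ (fun z => a * f z + b * g z) y (eVec n i))
      = fun y => a * fderiv ℝ f y (eVec n i) + b * fderiv ℝ g y (eVec n i) := by
    funext y
    exact fderiv_comb f g a b hfd hgd y (eVec n i)
  rw [h1]
  exact fderiv_comb _ _ a b (hFf (eVec n i)) (hFg (eVec n i)) x (eVec n i)

/-- the landscape inequality `|ψ| ≤ λ u ‖ψ‖_∞` a.e. -/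
theorem landscape_inequality (n : ℕ)
    (V u ψ : EuclideanSpace ℝ (Fin n) → ℝ) (lam : ℝ)
    (hVmeas : Measurable V) (hVbdd : ∃ M, ∀ x, |V x| ≤ M)
    (hVnonneg : ∀ x, 0 ≤ V x) (hVper : per V)
    (hu2 : ContDiff ℝ 2 u) (huper : per u)
    (hu : ∀ x, -lap u x + V x * u x = 1)
    (hψ2 : ContDiff ℝ 2 ψ) (hψper : per ψ)
    (hψ : ∀ x, -lap ψ x + V x * ψ x = lam * ψ x)
    (hψbdd : BddAbove (Set.range fun x => |ψ x|)) :
    ∀ᵐ x ∂(volume : Measure (EuclideanSpace ℝ (Fin n))),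
      |ψ x| ≤ lam * u x * (⨆ y, |ψ y|) := by
  classical
  set M : ℝ := ⨆ y, |ψ y| with hM
  have hMle : ∀ x, |ψ x| ≤ M := fun x => le_ciSup hψbdd x
  by_cases hψ0 : ∀ x, ψ x = 0
  · have hM0 : M = 0 := by
      rw [hM]
      simp only [hψ0, abs_zero]
      exact ciSup_const
    refine Filter.Eventually.of_forall fun x => ?_
    rw [hψ0 x, hM0]
    simp
  push_neg at hψ0
  obtain ⟨z, hz⟩ := hψ0
  -- the maximum point of |ψ|
  obtain ⟨x₀, hx₀⟩ := per_min (f := fun x => -|ψ x|)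
    (fun x i => by simp only; rw [hψper x i]) (hψ2.continuous.abs.neg)
  have hmax : ∀ x, |ψ x| ≤ |ψ x₀| := fun x => by
    have := hx₀ x; linarith
  have hx₀pos : 0 < |ψ x₀| := lt_of_lt_of_le (abs_pos.2 hz) (hmax z)
  -- Step A : 0 ≤ lam
  have hlam : 0 ≤ lam := by
    rcases lt_trichotomy (ψ x₀) 0 with hsgn | hsgn | hsgn
    · -- x₀ is a global minimum of ψ
      have hminψ : ∀ x, ψ x₀ ≤ ψ x := by
        intro x
        have h1 := hmax x
        have h2 : -|ψ x| ≤ ψ x := neg_abs_le (ψ x)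
        rw [abs_of_neg hsgn] at h1
        linarith
      have hlap : 0 ≤ lap ψ x₀ := Finset.sum_nonneg fun i _ =>
        second_deriv_nonneg hψ2 hminψ _
      have e1 := hψ x₀
      have hVψ : V x₀ * ψ x₀ ≤ 0 := mul_nonpos_of_nonneg_of_nonpos (hVnonneg x₀) hsgn.le
      by_contra hcon
      push_neg at hcon
      nlinarith [mul_pos_of_neg_of_neg hcon hsgn]
    · rw [hsgn] at hx₀pos; simp at hx₀pos
    · -- x₀ is a global maximum of ψ : consider -ψ
      have hminψ : ∀ x, (-1 : ℝ) * ψ x₀ + 0 * u x₀ ≤ -1 * ψ x + 0 * u x := by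
        intro x
        have h1 := hmax x
        have h2 : ψ x ≤ |ψ x| := le_abs_self (ψ x)
        rw [abs_of_pos hsgn] at h1
        nlinarith
      have hc2 : ContDiff ℝ 2 (fun z => (-1 : ℝ) * ψ z + 0 * u z) :=
        (contDiff_const.mul hψ2).add (contDiff_const.mul hu2)
      have hlap : 0 ≤ lap (fun z => (-1 : ℝ) * ψ z + 0 * u z) x₀ :=
        Finset.sum_nonneg fun i _ => second_deriv_nonneg hc2 hminψ _
      rw [lap_comb hψ2 hu2 (-1) 0 x₀] at hlap
      have e1 := hψ x₀
      have hVψ : 0 ≤ V x₀ * ψ x₀ := mul_nonneg (hVnonneg x₀) hsgn.le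
      by_contra hcon
      push_neg at hcon
      nlinarith [mul_pos_of_neg_of_neg hcon (neg_neg_of_pos hsgn)]
  have hM0 : 0 ≤ M := le_trans (abs_nonneg _) (hMle z)
  -- Step B : maximum principle
  have key : ∀ c : ℝ, (c = 1 ∨ c = -1) → ∀ x, 0 ≤ lam * M * u x + c * ψ x := by
    intro c hc x
    have hstep : ∀ ε : ℝ, 0 < ε → 0 ≤ c * ψ x + (lam * M + ε) * u x := by
      intro ε hε
      set b : ℝ := lam * M + ε with hb
      have hw2 : ContDiff ℝ 2 (fun z => c * ψ z + b * u z) :=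
        (contDiff_const.mul hψ2).add (contDiff_const.mul hu2)
      have hwper : per (fun z => c * ψ z + b * u z) := by
        intro y i
        simp only
        rw [hψper y i, huper y i]
      obtain ⟨x₁, hx₁⟩ := per_min hwper hw2.continuous
      have hlapw : 0 ≤ lap (fun z => c * ψ z + b * u z) x₁ :=
        Finset.sum_nonneg fun i _ => second_deriv_nonneg hw2 hx₁ _
      rw [lap_comb hψ2 hu2 c b x₁] at hlapw
      have e1 := hψ x₁
      have e2 := hu x₁
      have hMψ : 0 ≤ lam * M + c * (lam * ψ x₁) := by
        have hm : 0 ≤ M + c * ψ x₁ := by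
          rcases hc with h | h <;> subst h
          · have := neg_abs_le (ψ x₁); have := hMle x₁; nlinarith
          · have := le_abs_self (ψ x₁); have := hMle x₁; nlinarith
        nlinarith [mul_nonneg hlam hm]
      -- V x₁ * w x₁ ≥ ε > 0
      have hid : V x₁ * (c * ψ x₁ + b * u x₁)
          = (c * lap ψ x₁ + b * lap u x₁) + c * (lam * ψ x₁) + b := by
        linear_combination c * e1 + b * e2
      have hVw : ε ≤ V x₁ * (c * ψ x₁ + b * u x₁) := by
        rw [hid]
        linarith [hlapw, hMψ, hb.le, hb.ge]
      have hwpos : 0 < c * ψ x₁ + b * u x₁ := by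
        rcases le_or_gt (c * ψ x₁ + b * u x₁) 0 with h | h
        · have : V x₁ * (c * ψ x₁ + b * u x₁) ≤ 0 :=
            mul_nonpos_of_nonneg_of_nonpos (hVnonneg x₁) h
          linarith
        · exact h
      have := hx₁ x
      linarith
    by_contra hneg
    push_neg at hneg
    rcases le_or_gt (u x) 0 with hux | hux
    · have h1 := hstep 1 zero_lt_one
      nlinarith
    · set δ : ℝ := -(lam * M * u x + c * ψ x) with hδ
      have hδpos : 0 < δ := by rw [hδ]; linarith
      have h1 := hstep (δ / (2 * u x)) (by positivity)
      have h2 : (δ / (2 * u x)) * u x = δ / 2 := by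
        field_simp
      nlinarith
  refine Filter.Eventually.of_forall fun x => ?_
  have h1 := key 1 (Or.inl rfl) x
  have h2 := key (-1) (Or.inr rfl) x
  have habs : |ψ x| ≤ lam * M * u x := abs_le.2 ⟨by linarith, by linarith⟩
  calc |ψ x| ≤ lam * M * u x := habs
    _ = lam * u x * M := by ring
end
end

section
/- Let u > 0 be the landscape function solving -Δu + Vu = 1, W = 1/u the effective potential, and define Lφ = -u^{-2} div(u^2 ∇φ). Then for every φ ∈ H^1(Ω), the identity (-Δ + V)(uφ) = u·(Lφ + Wφ) holds in H^{-1}(Ω). -/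
open MeasureTheory

noncomputable section

lemma second_deriv_mul {n : ℕ} (f g : EuclideanSpace ℝ (Fin n) → ℝ)
    (hf : ContDiff ℝ 2 f) (hg : ContDiff ℝ 2 g)
    (e x : EuclideanSpace ℝ (Fin n)) :
    fderiv ℝ (fun y => fderiv ℝ (fun z => f z * g z) y e) x e
    = f x * fderiv ℝ (fun y => fderiv ℝ g y e) x e
      + g x * fderiv ℝ (fun y => fderiv ℝ f y e) x e
      + 2 * (fderiv ℝ f x e * fderiv ℝ g x e) := by
  have hfd := hf.differentiable two_ne_zero
  have hgd := hg.differentiable two_ne_zero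
  have hfd' : Differentiable ℝ (fun y => fderiv ℝ f y e) :=
    ((hf.fderiv_right (m := 1) (by norm_num)).clm_apply contDiff_const).differentiable one_ne_zero
  have hgd' : Differentiable ℝ (fun y => fderiv ℝ g y e) :=
    ((hg.fderiv_right (m := 1) (by norm_num)).clm_apply contDiff_const).differentiable one_ne_zero
  have h1 : (fun y => fderiv ℝ (fun z => f z * g z) y e)
      = fun y => f y * fderiv ℝ g y e + g y * fderiv ℝ f y e := by
    funext y
    rw [fderiv_fun_mul (hfd y) (hgd y)]
    simp [smul_eq_mul]
  rw [h1, fderiv_fun_add ((hfd x).fun_mul (hgd' x)) ((hgd x).fun_mul (hfd' x))]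
  simp only [ContinuousLinearMap.add_apply]
  rw [fderiv_fun_mul (hfd x) (hgd' x), fderiv_fun_mul (hgd x) (hfd' x)]
  simp [smul_eq_mul]
  ring

lemma div_term_expand {n : ℕ} (u φ : EuclideanSpace ℝ (Fin n) → ℝ)
    (hu2 : ContDiff ℝ 2 u) (hφ2 : ContDiff ℝ 2 φ)
    (e x : EuclideanSpace ℝ (Fin n)) :
    fderiv ℝ (fun y => (u y)^2 * fderiv ℝ φ y e) x e
    = (u x)^2 * fderiv ℝ (fun y => fderiv ℝ φ y e) x e
      + (2 * u x) * (fderiv ℝ u x e * fderiv ℝ φ x e) := by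
  have hud := hu2.differentiable two_ne_zero
  have hφd' : Differentiable ℝ (fun y => fderiv ℝ φ y e) :=
    ((hφ2.fderiv_right (m := 1) (by norm_num)).clm_apply contDiff_const).differentiable one_ne_zero
  have hsq : DifferentiableAt ℝ (fun y => (u y)^2) x := ((hud x).fun_mul (hud x)).congr_of_eventuallyEq
    (by filter_upwards with y; ring)
  have hsq' : (fun y => (u y)^2) = fun y => u y * u y := by funext y; ring
  rw [fderiv_fun_mul hsq (hφd' x)]
  simp only [ContinuousLinearMap.add_apply, ContinuousLinearMap.smul_apply, smul_eq_mul]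
  rw [hsq', fderiv_fun_mul (hud x) (hud x)]
  simp [smul_eq_mul]
  ring

/-- the fundamental identity `(-Δ + V)(uφ) = u (Lφ + Wφ)`,
where `W = 1/u` and `Lφ = -(1/u²) div(u² ∇φ)`. -/
theorem effective_potential_identity (n : ℕ)
    (V u φ : EuclideanSpace ℝ (Fin n) → ℝ)
    (hVmeas : Measurable V) (hVbdd : ∃ M, ∀ x, |V x| ≤ M)
    (hVnonneg : ∀ x, 0 ≤ V x) (hVper : per V)
    (hVpos : 0 < volume {x | x ∈ Qd n ∧ 0 < V x})
    (hu2 : ContDiff ℝ 2 u) (huper : per u) (hupos : ∀ x, 0 < u x)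
    (hu : ∀ x, -lap u x + V x * u x = 1)
    (hφ2 : ContDiff ℝ 2 φ) :
    ∀ x, -lap (fun y => u y * φ y) x + V x * (u x * φ x)
      = u x * ((-(1/(u x)^2) *
          ∑ i, fderiv ℝ (fun y => (u y)^2 * fderiv ℝ φ y (eVec n i)) x (eVec n i))
        + (1 / u x) * φ x) := by
  intro x
  have hux := hupos x
  have huu := hu x
  simp only [lap] at huu ⊢
  rw [Finset.sum_congr rfl (fun i _ => second_deriv_mul u φ hu2 hφ2 (eVec n i) x),
      Finset.sum_congr rfl (fun i _ => div_term_expand u φ hu2 hφ2 (eVec n i) x)]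
  simp only [Finset.sum_add_distrib, ← Finset.mul_sum]
  set S1 := ∑ i, fderiv ℝ u x (eVec n i) * fderiv ℝ φ x (eVec n i)
  set S2 := ∑ i, fderiv ℝ (fun y => fderiv ℝ φ y (eVec n i)) x (eVec n i)
  set S3 := ∑ i, fderiv ℝ (fun y => fderiv ℝ u y (eVec n i)) x (eVec n i)
  field_simp
  linear_combination (φ x) * huu
end
end

section
/- With u the landscape function, W = 1/u, and L as above, a function ψ ∈ H^1(Ω) satisfies (-Δ + V)ψ = λψ if and only if φ := ψ/u satisfies Lφ + Wφ = λφ. -/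
open MeasureTheory

noncomputable section

lemma key_identity {n : ℕ} (u ψ : EuclideanSpace ℝ (Fin n) → ℝ)
    (hu2 : ContDiff ℝ 2 u) (hupos : ∀ x, 0 < u x) (hψ2 : ContDiff ℝ 2 ψ)
    (x : EuclideanSpace ℝ (Fin n)) :
    ∑ i, fderiv ℝ (fun y => (u y)^2 * fderiv ℝ (fun z => ψ z / u z) y (eVec n i))
          x (eVec n i) = u x * lap ψ x - ψ x * lap u x := by
  have hune : ∀ y, u y ≠ 0 := fun y => (hupos y).ne'
  have hφ2 : ContDiff ℝ 2 (fun z => ψ z / u z) := hψ2.div hu2 hune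
  have hud : Differentiable ℝ u := hu2.differentiable two_ne_zero
  have hψd : Differentiable ℝ ψ := hψ2.differentiable two_ne_zero
  have hφd : Differentiable ℝ (fun z => ψ z / u z) := hφ2.differentiable two_ne_zero
  -- first order identity
  have h1 : ∀ (i : Fin n) (y : EuclideanSpace ℝ (Fin n)),
      (u y)^2 * fderiv ℝ (fun z => ψ z / u z) y (eVec n i)
        = u y * fderiv ℝ ψ y (eVec n i) - ψ y * fderiv ℝ u y (eVec n i) := by
    intro i y
    have hψeq : ψ = fun z => u z * (ψ z / u z) := by
      funext z; rw [mul_comm]; exact (div_mul_cancel₀ _ (hune z)).symm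
    have hD : fderiv ℝ ψ y = u y • fderiv ℝ (fun z => ψ z / u z) y
        + (ψ y / u y) • fderiv ℝ u y := by
      conv_lhs => rw [hψeq]
      exact fderiv_mul (hud y) (hφd y)
    have := congrArg (fun L : EuclideanSpace ℝ (Fin n) →L[ℝ] ℝ => L (eVec n i)) hD
    simp only [ContinuousLinearMap.add_apply, ContinuousLinearMap.smul_apply,
      smul_eq_mul] at this
    have huy := hune y
    field_simp at this ⊢
    nlinarith [this]
  -- second order
  have h2 : ∀ i : Fin n,
      fderiv ℝ (fun y => (u y)^2 * fderiv ℝ (fun z => ψ z / u z) y (eVec n i)) x (eVec n i)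
        = u x * fderiv ℝ (fun y => fderiv ℝ ψ y (eVec n i)) x (eVec n i)
          - ψ x * fderiv ℝ (fun y => fderiv ℝ u y (eVec n i)) x (eVec n i) := by
    intro i
    have hfun : (fun y => (u y)^2 * fderiv ℝ (fun z => ψ z / u z) y (eVec n i))
        = fun y => u y * fderiv ℝ ψ y (eVec n i) - ψ y * fderiv ℝ u y (eVec n i) := by
      funext y; exact h1 i y
    rw [hfun]
    have hDψ : ContDiff ℝ 1 (fun y => fderiv ℝ ψ y (eVec n i)) :=
      (hψ2.fderiv_right (le_refl _)).clm_apply contDiff_const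
    have hDu : ContDiff ℝ 1 (fun y => fderiv ℝ u y (eVec n i)) :=
      (hu2.fderiv_right (le_refl _)).clm_apply contDiff_const
    have hDψd := hDψ.differentiable one_ne_zero
    have hDud := hDu.differentiable one_ne_zero
    rw [fderiv_fun_sub ((hud x).fun_mul (hDψd x)) ((hψd x).fun_mul (hDud x)),
      fderiv_fun_mul (hud x) (hDψd x), fderiv_fun_mul (hψd x) (hDud x)]
    simp only [ContinuousLinearMap.sub_apply, ContinuousLinearMap.add_apply,
      ContinuousLinearMap.smul_apply, smul_eq_mul]
    ring
  rw [Finset.sum_congr rfl (fun i _ => h2 i), Finset.sum_sub_distrib, ← Finset.mul_sum,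
    ← Finset.mul_sum]
  rfl

/-- `ψ` is an eigenfunction of `-Δ + V` with eigenvalue `λ`
iff `φ = ψ/u` satisfies `Lφ + Wφ = λφ`, where `W = 1/u` and
`Lφ = -(1/u²) div(u² ∇φ)`. -/
theorem conjugated_eigenproblem (n : ℕ)
    (V u ψ : EuclideanSpace ℝ (Fin n) → ℝ) (lam : ℝ)
    (hVmeas : Measurable V) (hVbdd : ∃ M, ∀ x, |V x| ≤ M)
    (hVnonneg : ∀ x, 0 ≤ V x) (hVper : per V)
    (hVpos : 0 < volume {x | x ∈ Qd n ∧ 0 < V x})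
    (hu2 : ContDiff ℝ 2 u) (huper : per u) (hupos : ∀ x, 0 < u x)
    (hu : ∀ x, -lap u x + V x * u x = 1)
    (hψ2 : ContDiff ℝ 2 ψ) :
    (∀ x, -lap ψ x + V x * ψ x = lam * ψ x) ↔
    (∀ x, (-(1/(u x)^2) *
        ∑ i, fderiv ℝ (fun y => (u y)^2 * fderiv ℝ (fun z => ψ z / u z) y (eVec n i))
          x (eVec n i))
      + (1 / u x) * (ψ x / u x) = lam * (ψ x / u x)) := by
  constructor
  · intro h x
    rw [key_identity u ψ hu2 hupos hψ2 x]
    have h1 := hu x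
    have h2 := h x
    have hne := (hupos x).ne'
    field_simp
    linear_combination (-ψ x) * h1 + u x * h2
  · intro h x
    have h1 := hu x
    have h2 := h x
    rw [key_identity u ψ hu2 hupos hψ2 x] at h2
    have hne := (hupos x).ne'
    field_simp at h2
    have key : (-lap ψ x + V x * ψ x) * u x ^ 4 = (lam * ψ x) * u x ^ 4 := by
      linear_combination u x ^ 3 * h2 + (ψ x * u x ^ 3) * h1
    exact mul_right_cancel₀ (pow_ne_zero _ hne) key
end
end

section
/- Every eigenvalue λ of H = -Δ + V on the torus satisfies λ ≥ inf W, where W = 1/u is the effective potential. More precisely, if ψ is a normalized eigenfunction then λ = ∫ u^2 |∇(ψ/u)|^2 + ∫ W ψ^2 ≥ inf W. -/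
open MeasureTheory

noncomputable section

section Aux

variable {n : ℕ}

private lemma contDiff_D {f : EuclideanSpace ℝ (Fin n) → ℝ} (hf : ContDiff ℝ 2 f)
    (v : EuclideanSpace ℝ (Fin n)) : ContDiff ℝ 1 fun x => fderiv ℝ f x v :=
  (hf.fderiv_right (by norm_num)).clm_apply contDiff_const

private lemma D2_mul {f g : EuclideanSpace ℝ (Fin n) → ℝ} (hf : ContDiff ℝ 2 f)
    (hg : ContDiff ℝ 2 g) (x v : EuclideanSpace ℝ (Fin n)) :
    fderiv ℝ (fun y => fderiv ℝ (fun z => f z * g z) y v) x v =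
      f x * fderiv ℝ (fun y => fderiv ℝ g y v) x v
      + 2 * (fderiv ℝ f x v * fderiv ℝ g x v)
      + g x * fderiv ℝ (fun y => fderiv ℝ f y v) x v := by
  have hfd : Differentiable ℝ f := hf.differentiable two_ne_zero
  have hgd : Differentiable ℝ g := hg.differentiable two_ne_zero
  have hDf : Differentiable ℝ fun y => fderiv ℝ f y v := (contDiff_D hf v).differentiable one_ne_zero
  have hDg : Differentiable ℝ fun y => fderiv ℝ g y v := (contDiff_D hg v).differentiable one_ne_zero
  have h1 : (fun y => fderiv ℝ (fun z => f z * g z) y v)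
      = fun y => f y * fderiv ℝ g y v + g y * fderiv ℝ f y v := by
    funext y
    rw [fderiv_fun_mul (hfd y) (hgd y)]
    simp [smul_eq_mul]
  rw [h1, fderiv_fun_add (f := fun y => f y * fderiv ℝ g y v) (g := fun y => g y * fderiv ℝ f y v) ((hfd x).mul (hDg x)) ((hgd x).mul (hDf x)),
    fderiv_fun_mul (hfd x) (hDg x), fderiv_fun_mul (hgd x) (hDf x)]
  simp [smul_eq_mul]
  ring

private lemma lap_mul {f g : EuclideanSpace ℝ (Fin n) → ℝ} (hf : ContDiff ℝ 2 f)
    (hg : ContDiff ℝ 2 g) (x : EuclideanSpace ℝ (Fin n)) :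
    lap (fun z => f z * g z) x =
      f x * lap g x
      + 2 * ∑ i, fderiv ℝ f x (eVec n i) * fderiv ℝ g x (eVec n i)
      + g x * lap f x := by
  unfold lap
  rw [Finset.sum_congr rfl fun i _ => D2_mul hf hg x (eVec n i)]
  rw [Finset.sum_add_distrib, Finset.sum_add_distrib, ← Finset.mul_sum, ← Finset.mul_sum,
    ← Finset.mul_sum]

private lemma fderiv_per {f : EuclideanSpace ℝ (Fin n) → ℝ} (hf : Differentiable ℝ f)
    (hp : per f) (x : EuclideanSpace ℝ (Fin n)) (j : Fin n) :
    fderiv ℝ f (x + eVec n j) = fderiv ℝ f x := by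
  have h1 : HasFDerivAt (fun y => f (y + eVec n j)) (fderiv ℝ f (x + eVec n j)) x := by
    have := (hf (x + eVec n j)).hasFDerivAt.comp x ((hasFDerivAt_id x).add_const (eVec n j))
    exact this
  have h2 : (fun y => f (y + eVec n j)) = f := funext fun y => hp y j
  rw [h2] at h1
  exact (h1.fderiv).symm

/-- Divergence theorem for periodic `C¹` vector fields on the pi-space box. -/
private lemma pdiv (m : ℕ) (G : Fin (m+1) → (Fin (m+1) → ℝ) → ℝ)
    (hG : ∀ i, ContDiff ℝ 1 (G i))
    (hperG : ∀ i x, G i (x + Pi.single i 1) = G i x) :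
    ∫ x in Set.Icc (0 : Fin (m+1) → ℝ) 1, ∑ i, fderiv ℝ (G i) x (Pi.single i 1) = 0 := by
  have hGd : ∀ i, Differentiable ℝ (G i) := fun i => (hG i).differentiable one_ne_zero
  have hcont : Continuous fun x => ∑ i, fderiv ℝ (G i) x (Pi.single i 1) :=
    continuous_finset_sum _ fun i _ =>
      ((hG i).continuous_fderiv one_ne_zero).clm_apply continuous_const
  have hle : (0 : Fin (m+1) → ℝ) ≤ 1 := fun i => by norm_num
  have key := MeasureTheory.integral_divergence_of_hasFDerivAt_off_countable'
    (0 : Fin (m+1) → ℝ) 1 hle G (fun i x => fderiv ℝ (G i) x) ∅ Set.countable_empty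
    (fun i => (hG i).continuous.continuousOn)
    (fun x _ i => (hGd i x).hasFDerivAt)
    (hcont.continuousOn.integrableOn_compact isCompact_Icc)
  rw [key]
  refine Finset.sum_eq_zero fun i _ => sub_eq_zero.2 ?_
  refine integral_congr_ae (Filter.Eventually.of_forall fun x => ?_)
  have hx : (Fin.insertNth i ((1 : Fin (m+1) → ℝ) i) x : Fin (m+1) → ℝ)
      = Fin.insertNth i ((0 : Fin (m+1) → ℝ) i) x + Pi.single i 1 := by
    ext j
    rcases eq_or_ne j i with h | h
    · subst h; simp
    · obtain ⟨k, rfl⟩ := Fin.exists_succAbove_eq h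
      simp [Fin.succAbove_ne, Pi.single_eq_of_ne (Fin.succAbove_ne i k)]
  show G i (Fin.insertNth i ((1 : Fin (m+1) → ℝ) i) x) = G i (Fin.insertNth i ((0 : Fin (m+1) → ℝ) i) x)
  rw [hx, hperG]

/-- Divergence theorem for periodic `C¹` vector fields over the fundamental domain. -/
private lemma ediv (n : ℕ) (F : Fin n → EuclideanSpace ℝ (Fin n) → ℝ)
    (hF : ∀ i, ContDiff ℝ 1 (F i))
    (hperF : ∀ i x, F i (x + eVec n i) = F i x) :
    ∫ x in Qd n, ∑ i, fderiv ℝ (F i) x (eVec n i) = 0 := by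
  cases n with
  | zero => simp
  | succ m =>
    set em := (MeasurableEquiv.toLp 2 (Fin (m+1) → ℝ)).symm with hem
    set eL := EuclideanSpace.equiv (Fin (m+1)) ℝ with heL
    have hcoe : ∀ y : Fin (m+1) → ℝ, (em.symm y : EuclideanSpace ℝ (Fin (m+1))) = eL.symm y :=
      fun _ => rfl
    set S : Set (Fin (m+1) → ℝ) := {y | ∀ i, y i ∈ Set.Ico (0:ℝ) 1} with hS
    have hSpi : S = Set.univ.pi fun _ => Set.Ico (0:ℝ) 1 := by
      ext y; simp [hS, Set.mem_pi]
    have himg : em.symm '' S = Qd (m+1) := by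
      ext x
      constructor
      · rintro ⟨y, hy, rfl⟩
        exact fun i => hy i
      · intro hx
        exact ⟨em x, fun i => hx i, em.symm_apply_apply x⟩
    have hmp := (EuclideanSpace.volume_preserving_symm_measurableEquiv_toLp (Fin (m+1))).symm
    have step1 : (∫ x in Qd (m+1), ∑ i, fderiv ℝ (F i) x (eVec (m+1) i))
        = ∫ y in S, ∑ i, fderiv ℝ (F i) (em.symm y) (eVec (m+1) i) := by
      rw [← himg]
      exact hmp.setIntegral_image_emb em.symm.measurableEmbedding _ S
    have hSmeas : MeasurableSet S := by
      rw [hSpi]; exact MeasurableSet.univ_pi fun i => measurableSet_Ico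
    have hae : S =ᶠ[ae (volume : Measure (Fin (m+1) → ℝ))] Set.Icc 0 1 := by
      rw [MeasureTheory.ae_eq_set]
      constructor
      · have : S \ Set.Icc 0 1 = ∅ := by
          rw [Set.diff_eq_empty]
          intro y hy
          rw [Set.mem_Icc]
          exact ⟨fun i => (hy i).1, fun i => (hy i).2.le⟩
        simp [this]
      · have hsub : S ⊆ Set.Icc 0 1 := by
          intro y hy
          rw [Set.mem_Icc]
          exact ⟨fun i => (hy i).1, fun i => (hy i).2.le⟩
        have hvS : volume S = 1 := by
          rw [hSpi, volume_pi_pi]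
          simp
        have hvI : volume (Set.Icc (0 : Fin (m+1) → ℝ) 1) = 1 := by
          rw [Real.volume_Icc_pi]
          simp
        rw [measure_diff hsub hSmeas.nullMeasurableSet (by rw [hvS]; exact ENNReal.one_ne_top),
          hvS, hvI, tsub_self]
    have hGder : ∀ (i) (y : Fin (m+1) → ℝ),
        fderiv ℝ (fun z => F i (eL.symm z)) y (Pi.single i 1)
          = fderiv ℝ (F i) (eL.symm y) (eVec (m+1) i) := by
      intro i y
      have h1 : HasFDerivAt (fun z => F i (eL.symm z))
          ((fderiv ℝ (F i) (eL.symm y)).comp (eL.symm : (Fin (m+1) → ℝ) →L[ℝ] _)) y :=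
        (((hF i).differentiable one_ne_zero) (eL.symm y)).hasFDerivAt.comp y eL.symm.hasFDerivAt
      rw [h1.fderiv]
      rfl
    have step2 : (∫ y in S, ∑ i, fderiv ℝ (F i) (em.symm y) (eVec (m+1) i))
        = ∫ y in Set.Icc (0 : Fin (m+1) → ℝ) 1,
            ∑ i, fderiv ℝ (fun z => F i (eL.symm z)) y (Pi.single i 1) := by
      rw [MeasureTheory.setIntegral_congr_set hae]
      refine integral_congr_ae (Filter.Eventually.of_forall fun y => ?_)
      refine Finset.sum_congr rfl fun i _ => ?_
      rw [hGder i y, hcoe]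
    rw [step1, step2]
    refine pdiv m (fun i z => F i (eL.symm z)) (fun i => (hF i).comp eL.symm.contDiff) ?_
    intro i x
    have h3 : eL.symm (x + Pi.single i 1) = eL.symm x + eVec (m+1) i := by
      rw [map_add]; rfl
    show F i (eL.symm (x + Pi.single i 1)) = F i (eL.symm x)
    rw [h3, hperF]

end Aux

/-- `λ ≥ inf W` with `W = 1/u`; more precisely, for a normalized
eigenfunction, `λ = ∫ u² |∇(ψ/u)|² + ∫ W ψ² ≥ inf W`. -/
theorem eigenvalue_ge_inf_W (n : ℕ)
    (V u ψ : EuclideanSpace ℝ (Fin n) → ℝ) (lam : ℝ)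
    (hVmeas : Measurable V) (hVbdd : ∃ M, ∀ x, |V x| ≤ M)
    (hVnonneg : ∀ x, 0 ≤ V x) (hVper : per V)
    (hVpos : 0 < volume {x | x ∈ Qd n ∧ 0 < V x})
    (hu2 : ContDiff ℝ 2 u) (huper : per u) (hupos : ∀ x, 0 < u x)
    (hu : ∀ x, -lap u x + V x * u x = 1)
    (hψ2 : ContDiff ℝ 2 ψ) (hψper : per ψ)
    (hψ : ∀ x, -lap ψ x + V x * ψ x = lam * ψ x)
    (hnorm : (∫ x in Qd n, (ψ x)^2) = 1) :
    lam = (∫ x in Qd n,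
            (u x)^2 * ∑ i, (fderiv ℝ (fun z => ψ z / u z) x (eVec n i))^2)
          + (∫ x in Qd n, (1 / u x) * (ψ x)^2)
      ∧ (⨅ x, 1 / u x) ≤ lam := by
  have hune : ∀ x, u x ≠ 0 := fun x => (hupos x).ne'
  set φ : EuclideanSpace ℝ (Fin n) → ℝ := fun z => ψ z / u z with hφdef
  have hφ2 : ContDiff ℝ 2 φ := hψ2.div hu2 hune
  have hφd : Differentiable ℝ φ := hφ2.differentiable two_ne_zero
  have hud : Differentiable ℝ u := hu2.differentiable two_ne_zero
  have hψx : ∀ z, ψ z = u z * φ z := fun z => by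
    rw [show u z * φ z = ψ z / u z * u z from mul_comm _ _, div_mul_cancel₀ (ψ z) (hune z)]
  have hφper : per φ := fun x j => by
    show ψ (x + eVec n j) / u (x + eVec n j) = ψ x / u x
    rw [hψper, huper]
  have key : ∀ x, u x * lap φ x
      + 2 * ∑ i, fderiv ℝ u x (eVec n i) * fderiv ℝ φ x (eVec n i)
      = φ x - lam * (u x * φ x) := by
    intro x
    have e1 := hψ x
    have e2 := hu x
    have e3 : lap ψ x = u x * lap φ x
        + 2 * ∑ i, fderiv ℝ u x (eVec n i) * fderiv ℝ φ x (eVec n i) + φ x * lap u x := by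
      have h : ψ = fun z => u z * φ z := funext hψx
      rw [h]
      exact lap_mul hu2 hφ2 x
    rw [e3, hψx x] at e1
    linear_combination -e1 + φ x * e2
  have hFC1 : ∀ i, ContDiff ℝ 1
      fun y => (u y)^2 * φ y * fderiv ℝ φ y (eVec n i) := fun i =>
    (((hu2.pow 2).mul hφ2).of_le (by norm_num)).mul (contDiff_D hφ2 _)
  have hFper : ∀ (i) (x : EuclideanSpace ℝ (Fin n)),
      (u (x + eVec n i))^2 * φ (x + eVec n i) * fderiv ℝ φ (x + eVec n i) (eVec n i)
        = (u x)^2 * φ x * fderiv ℝ φ x (eVec n i) := by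
    intro i x
    rw [huper, hφper, fderiv_per hφd hφper]
  have per_i : ∀ (x : EuclideanSpace ℝ (Fin n)) (i),
      fderiv ℝ (fun y => (u y)^2 * φ y * fderiv ℝ φ y (eVec n i)) x (eVec n i)
      = (u x)^2 * φ x * fderiv ℝ (fun y => fderiv ℝ φ y (eVec n i)) x (eVec n i)
        + (u x)^2 * (fderiv ℝ φ x (eVec n i))^2
        + 2 * (u x * φ x) * (fderiv ℝ u x (eVec n i) * fderiv ℝ φ x (eVec n i)) := by
    intro x i
    have hA : DifferentiableAt ℝ (fun y => (u y)^2 * φ y) x :=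
      (((hu2.pow 2).mul hφ2).differentiable two_ne_zero) x
    have hB : DifferentiableAt ℝ (fun y => fderiv ℝ φ y (eVec n i)) x :=
      ((contDiff_D hφ2 (eVec n i)).differentiable one_ne_zero) x
    have hpow : fderiv ℝ (fun y => (u y)^2) x (eVec n i)
        = 2 * u x * fderiv ℝ u x (eVec n i) := by
      have h : (fun y => (u y)^2) = fun y => u y * u y := by funext y; ring
      rw [h, fderiv_fun_mul (hud x) (hud x)]
      simp [smul_eq_mul]
      ring
    have hA' : fderiv ℝ (fun y => (u y)^2 * φ y) x (eVec n i)
        = (u x)^2 * fderiv ℝ φ x (eVec n i) + φ x * (2 * u x * fderiv ℝ u x (eVec n i)) := by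
      rw [fderiv_fun_mul ((hu2.pow 2).differentiable two_ne_zero x) (hφd x)]
      simp only [ContinuousLinearMap.add_apply, ContinuousLinearMap.coe_smul',
        Pi.smul_apply, smul_eq_mul]
      rw [hpow]
    rw [fderiv_fun_mul hA hB]
    simp only [ContinuousLinearMap.add_apply, ContinuousLinearMap.coe_smul',
      Pi.smul_apply, smul_eq_mul]
    rw [hA']
    ring
  have hdiv : ∀ x, (∑ i, fderiv ℝ (fun y => (u y)^2 * φ y * fderiv ℝ φ y (eVec n i)) x (eVec n i))
      = (u x)^2 * (∑ i, (fderiv ℝ φ x (eVec n i))^2) + (1 / u x) * (ψ x)^2 - lam * (ψ x)^2 := by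
    intro x
    rw [Finset.sum_congr rfl fun i _ => per_i x i]
    rw [Finset.sum_add_distrib, Finset.sum_add_distrib, ← Finset.mul_sum, ← Finset.mul_sum,
      ← Finset.mul_sum]
    have hlap : (∑ i, fderiv ℝ (fun y => fderiv ℝ φ y (eVec n i)) x (eVec n i)) = lap φ x := rfl
    rw [hlap, hψx x]
    have hfld : (1 / u x) * (u x * φ x)^2 = u x * (φ x)^2 := by
      rw [mul_pow, ← mul_assoc]
      congr 1
      rw [sq, ← mul_assoc, one_div, inv_mul_cancel₀ (hune x), one_mul]
    rw [hfld]
    linear_combination (u x * φ x) * key x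
  have hdiv0 := ediv n (fun i y => (u y)^2 * φ y * fderiv ℝ φ y (eVec n i)) hFC1
    (fun i x => hFper i x)
  -- measurability / integrability
  have hQmeas : MeasurableSet (Qd n) := by
    have h : Qd n = ⋂ i, (fun x : EuclideanSpace ℝ (Fin n) => x i) ⁻¹' Set.Ico 0 1 := by
      ext x; simp [Qd]
    have hci : ∀ i, Continuous fun x : EuclideanSpace ℝ (Fin n) => x i := fun i =>
      (EuclideanSpace.proj (𝕜 := ℝ) i).continuous
    rw [h]
    exact MeasurableSet.iInter fun i => (hci i).measurable measurableSet_Ico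
  have hK : IsCompact {x : EuclideanSpace ℝ (Fin n) | ∀ i, x i ∈ Set.Icc (0:ℝ) 1} := by
    have hKeq : (EuclideanSpace.equiv (Fin n) ℝ) ⁻¹' Set.Icc 0 1
        = {x : EuclideanSpace ℝ (Fin n) | ∀ i, x i ∈ Set.Icc (0:ℝ) 1} := by
      ext x
      simp [Set.mem_Icc, Pi.le_def, forall_and]
    rw [← hKeq]
    exact (EuclideanSpace.equiv (Fin n) ℝ).toHomeomorph.isCompact_preimage.2 isCompact_Icc
  have hQK : Qd n ⊆ {x : EuclideanSpace ℝ (Fin n) | ∀ i, x i ∈ Set.Icc (0:ℝ) 1} :=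
    fun x hx i => ⟨(hx i).1, (hx i).2.le⟩
  have IA : IntegrableOn (fun x => (u x)^2 * ∑ i, (fderiv ℝ φ x (eVec n i))^2) (Qd n) := by
    have hc : Continuous fun x => (u x)^2 * ∑ i, (fderiv ℝ φ x (eVec n i))^2 :=
      (hu2.continuous.pow 2).mul (continuous_finset_sum _ fun i _ =>
        ((contDiff_D hφ2 (eVec n i)).continuous).pow 2)
    exact (hc.continuousOn.integrableOn_compact hK).mono_set hQK
  have IB : IntegrableOn (fun x => (1 / u x) * (ψ x)^2) (Qd n) := by
    have hc : Continuous fun x => (1 / u x) * (ψ x)^2 :=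
      (continuous_const.div hu2.continuous hune).mul (hψ2.continuous.pow 2)
    exact (hc.continuousOn.integrableOn_compact hK).mono_set hQK
  have IC : IntegrableOn (fun x => (ψ x)^2) (Qd n) := by
    have hc : Continuous fun x => (ψ x)^2 := hψ2.continuous.pow 2
    exact (hc.continuousOn.integrableOn_compact hK).mono_set hQK
  have hzero : (∫ x in Qd n, ((u x)^2 * (∑ i, (fderiv ℝ φ x (eVec n i))^2)
      + (1 / u x) * (ψ x)^2 - lam * (ψ x)^2)) = 0 := by
    calc (∫ x in Qd n, ((u x)^2 * (∑ i, (fderiv ℝ φ x (eVec n i))^2)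
          + (1 / u x) * (ψ x)^2 - lam * (ψ x)^2))
        = ∫ x in Qd n, ∑ i,
            fderiv ℝ (fun y => (u y)^2 * φ y * fderiv ℝ φ y (eVec n i)) x (eVec n i) :=
          integral_congr_ae (Filter.Eventually.of_forall fun x => (hdiv x).symm)
      _ = 0 := hdiv0
  have Iadd : IntegrableOn (fun x => (u x)^2 * (∑ i, (fderiv ℝ φ x (eVec n i))^2)
      + (1 / u x) * (ψ x)^2) (Qd n) := IA.add IB
  rw [integral_sub Iadd (IC.const_mul lam), integral_add IA IB,
    integral_const_mul, hnorm, mul_one] at hzero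
  have hlam : lam = (∫ x in Qd n, (u x)^2 * ∑ i, (fderiv ℝ φ x (eVec n i))^2)
      + ∫ x in Qd n, (1 / u x) * (ψ x)^2 := by linarith
  refine ⟨hlam, ?_⟩
  have hbdd : BddBelow (Set.range fun x : EuclideanSpace ℝ (Fin n) => 1 / u x) := by
    refine ⟨0, ?_⟩
    rintro y ⟨x, rfl⟩
    have := hupos x
    positivity
  have hcle : ∀ x, (⨅ x, 1 / u x) ≤ 1 / u x := fun x => ciInf_le hbdd x
  have hIA0 : 0 ≤ ∫ x in Qd n, (u x)^2 * ∑ i, (fderiv ℝ φ x (eVec n i))^2 := by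
    refine setIntegral_nonneg hQmeas fun x _ => ?_
    have h1 : (0:ℝ) ≤ ∑ i, (fderiv ℝ φ x (eVec n i))^2 :=
      Finset.sum_nonneg fun i _ => sq_nonneg _
    positivity
  have h2 : 0 ≤ ∫ x in Qd n, ((1 / u x) * (ψ x)^2 - (⨅ x, 1 / u x) * (ψ x)^2) := by
    refine setIntegral_nonneg hQmeas fun x _ => ?_
    have := hcle x
    nlinarith [sq_nonneg (ψ x)]
  rw [integral_sub IB (IC.const_mul _), integral_const_mul, hnorm, mul_one] at h2
  linarith
end
end

section
/- For any eigenpair (ψ, λ) of H = -Δ + V on the torus with ‖ψ‖_{L^2} = 1, writing φ = ψ/u, the energy decomposition λ = ∫_Ω u^2 |∇φ|^2 dx + ∫_Ω W ψ^2 dx holds, where u is the landscape function and W = 1/u. -/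
open MeasureTheory

noncomputable section

section Aux
open Set

lemma myDivZero {m : ℕ} (G : (Fin (m+1) → ℝ) → ℝ) (hG : ContDiff ℝ 1 G)
    (i : Fin (m+1)) (hper : ∀ y, G (y + Pi.single i 1) = G y) :
    ∫ y in Icc (0 : Fin (m+1) → ℝ) 1, fderiv ℝ G y (Pi.single i 1) = 0 := by
  classical
  have hGd : Differentiable ℝ G := hG.differentiable one_ne_zero
  have hsum : ∀ (y : Fin (m+1) → ℝ),
      (∑ j, (if j = i then fderiv ℝ G y else 0) (Pi.single j (1:ℝ))) = fderiv ℝ G y (Pi.single i 1) := by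
    intro y
    rw [Finset.sum_eq_single i]
    · simp
    · intro j _ hj; simp [hj]
    · simp
  have key := integral_divergence_of_hasFDerivAt_off_countable'
      (0 : Fin (m+1) → ℝ) 1 (fun _ => zero_le_one)
      (fun j y => if j = i then G y else 0)
      (fun j y => if j = i then fderiv ℝ G y else 0)
      ∅ Set.countable_empty ?_ ?_ ?_
  · have h1 : ∫ y in Icc (0 : Fin (m+1) → ℝ) 1, fderiv ℝ G y (Pi.single i 1)
        = ∫ x in Icc (0 : Fin (m+1) → ℝ) 1,
            ∑ j, (if j = i then fderiv ℝ G x else 0) (Pi.single j (1:ℝ)) :=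
      setIntegral_congr_fun measurableSet_Icc fun y _ => (hsum y).symm
    rw [h1, key]
    apply Finset.sum_eq_zero
    intro j _
    by_cases h : j = i
    · subst h
      have hins : ∀ x : Fin m → ℝ,
          (Fin.insertNth j (1:ℝ) x : Fin (m+1) → ℝ)
            = (Fin.insertNth j (0:ℝ) x : Fin (m+1) → ℝ) + Pi.single j 1 := by
        intro x
        funext k
        refine Fin.succAboveCases j ?_ ?_ k
        · simp
        · intro l
          simp [Fin.insertNth_apply_succAbove, Pi.single_eq_of_ne (Fin.succAbove_ne j l)]
      have hGG : ∀ x : Fin m → ℝ, G (Fin.insertNth j (1:ℝ) x) = G (Fin.insertNth j (0:ℝ) x) := by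
        intro x; rw [hins x, hper]
      simp only [if_pos rfl, Pi.one_apply, Pi.zero_apply, hGG, sub_self]
    · simp [h]
  · -- Hc
    intro j
    by_cases h : j = i
    · simpa [h] using hG.continuous.continuousOn
    · simp only [h, if_false]; exact continuousOn_const
  · -- Hd
    intro x _ j
    by_cases h : j = i
    · simpa [h] using (hGd x).hasFDerivAt
    · simp only [h, if_false]; exact hasFDerivAt_const 0 x
  · -- Hi
    have : Continuous fun y => fderiv ℝ G y (Pi.single i (1:ℝ)) :=
      (hG.continuous_fderiv one_ne_zero).clm_apply continuous_const
    refine ((this.continuousOn).integrableOn_compact isCompact_Icc).congr_fun ?_ measurableSet_Icc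
    intro y _
    exact (hsum y).symm

lemma myTorusDiv {n : ℕ} (g : EuclideanSpace ℝ (Fin n) → ℝ)
    (hg : ContDiff ℝ 1 g) (hper : per g) (i : Fin n) :
    ∫ x in Qd n, fderiv ℝ g x (eVec n i) = 0 := by
  obtain ⟨m, rfl⟩ : ∃ m, n = m + 1 := ⟨n - 1, (Nat.succ_pred_eq_of_pos i.pos).symm⟩
  set eL := PiLp.continuousLinearEquiv 2 ℝ (fun _ : Fin (m+1) => ℝ) with heL
  set G : (Fin (m+1) → ℝ) → ℝ := fun y => g (eL.symm y) with hGdef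
  have hG : ContDiff ℝ 1 G := hg.comp eL.symm.contDiff
  have hsingle : eL.symm (Pi.single i 1) = eVec (m+1) i := rfl
  have hGper : ∀ y, G (y + Pi.single i 1) = G y := by
    intro y
    show g (eL.symm (y + Pi.single i 1)) = g (eL.symm y)
    rw [map_add, hsingle]
    exact hper _ i
  have hfd : ∀ y, fderiv ℝ G y (Pi.single i 1) = fderiv ℝ g (eL.symm y) (eVec (m+1) i) := by
    intro y
    have h1 : HasFDerivAt G (((fderiv ℝ g (eL.symm y)).comp
        (eL.symm : (Fin (m+1) → ℝ) →L[ℝ] EuclideanSpace ℝ (Fin (m+1))))) y :=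
      ((hg.differentiable one_ne_zero _).hasFDerivAt).comp y eL.symm.hasFDerivAt
    rw [h1.fderiv]
    rfl
  have hvol := EuclideanSpace.volume_preserving_symm_measurableEquiv_toLp (Fin (m+1))
  set e := (MeasurableEquiv.toLp 2 (Fin (m+1) → ℝ)).symm with he
  have htransfer := hvol.setIntegral_preimage_emb e.measurableEmbedding
      (fun y => fderiv ℝ g (eL.symm y) (eVec (m+1) i)) (univ.pi fun _ => Ico (0:ℝ) 1)
  have hpre : e ⁻¹' (univ.pi fun _ => Ico (0:ℝ) 1) = Qd (m+1) := by
    ext x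
    simp [Qd, e, MeasurableEquiv.coe_toLp_symm]
  have hid : ∀ x : EuclideanSpace ℝ (Fin (m+1)), eL.symm (e x) = x := fun _ => rfl
  have hstep1 : ∫ x in Qd (m+1), fderiv ℝ g x (eVec (m+1) i)
      = ∫ y in (univ.pi fun _ => Ico (0:ℝ) 1), fderiv ℝ g (eL.symm y) (eVec (m+1) i) := by
    rw [← htransfer, hpre]
    exact setIntegral_congr_fun (hpre ▸ e.measurable (MeasurableSet.univ_pi fun _ => measurableSet_Ico))
      fun x _ => by rw [hid]
  have haeeq : (univ.pi fun _ : Fin (m+1) => Ico (0:ℝ) 1) =ᵐ[volume] Icc (0 : Fin (m+1) → ℝ) 1 := by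
    rw [MeasureTheory.volume_pi]
    exact Measure.univ_pi_Ico_ae_eq_Icc
  rw [hstep1, setIntegral_congr_set haeeq]
  rw [← myDivZero G hG i hGper]
  exact setIntegral_congr_fun measurableSet_Icc fun y _ => (hfd y).symm

/-- Product rule, applied to a vector. -/
lemma fderiv_mul_apply' {n : ℕ} {f g : EuclideanSpace ℝ (Fin n) → ℝ}
    {x v : EuclideanSpace ℝ (Fin n)}
    (hf : DifferentiableAt ℝ f x) (hg : DifferentiableAt ℝ g x) :
    fderiv ℝ (fun z => f z * g z) x v = f x * fderiv ℝ g x v + g x * fderiv ℝ f x v := by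
  rw [fderiv_fun_mul hf hg]
  simp

/-- The derivative of a differentiable periodic function is periodic. -/
lemma fderiv_translate {n : ℕ} (f : EuclideanSpace ℝ (Fin n) → ℝ)
    (hf : Differentiable ℝ f) (hp : per f) (x : EuclideanSpace ℝ (Fin n)) (j : Fin n) :
    fderiv ℝ f (x + eVec n j) = fderiv ℝ f x := by
  have h : HasFDerivAt (fun y => f (y + eVec n j))
      ((fderiv ℝ f (x + eVec n j)).comp (ContinuousLinearMap.id ℝ _)) x :=
    (hf (x + eVec n j)).hasFDerivAt.comp x ((hasFDerivAt_id x).add_const _)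
  have h2 : (fun y => f (y + eVec n j)) = f := funext fun y => hp y j
  have h3 := h.fderiv
  rw [h2] at h3
  rw [h3, ContinuousLinearMap.comp_id]

end Aux

/-- the energy decomposition
`λ = ∫ u² |∇φ|² + ∫ W ψ²` for a normalized eigenpair, with `φ = ψ/u`, `W = 1/u`. -/
theorem energy_decomposition (n : ℕ)
    (V u ψ : EuclideanSpace ℝ (Fin n) → ℝ) (lam : ℝ)
    (hVmeas : Measurable V) (hVbdd : ∃ M, ∀ x, |V x| ≤ M)
    (hVnonneg : ∀ x, 0 ≤ V x) (hVper : per V)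
    (hVpos : 0 < volume {x | x ∈ Qd n ∧ 0 < V x})
    (hu2 : ContDiff ℝ 2 u) (huper : per u) (hupos : ∀ x, 0 < u x)
    (hu : ∀ x, -lap u x + V x * u x = 1)
    (hψ2 : ContDiff ℝ 2 ψ) (hψper : per ψ)
    (hψ : ∀ x, -lap ψ x + V x * ψ x = lam * ψ x)
    (hnorm : (∫ x in Qd n, (ψ x)^2) = 1) :
    lam = (∫ x in Qd n,
            (u x)^2 * ∑ i, (fderiv ℝ (fun z => ψ z / u z) x (eVec n i))^2)
          + (∫ x in Qd n, (1 / u x) * (ψ x)^2) := by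
  classical
  have hun : ∀ z, u z ≠ 0 := fun z => (hupos z).ne'
  have hu1 : ContDiff ℝ 1 u := hu2.of_le one_le_two
  have hψ1 : ContDiff ℝ 1 ψ := hψ2.of_le one_le_two
  have hud : Differentiable ℝ u := hu1.differentiable one_ne_zero
  have hψd : Differentiable ℝ ψ := hψ1.differentiable one_ne_zero
  set φ : EuclideanSpace ℝ (Fin n) → ℝ := fun z => ψ z / u z with hφdef
  have hφ2 : ContDiff ℝ 2 φ := hψ2.div hu2 hun
  have hφ1 : ContDiff ℝ 1 φ := hφ2.of_le one_le_two
  have hφd : Differentiable ℝ φ := hφ1.differentiable one_ne_zero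
  have hψz : ∀ z, ψ z = u z * φ z := fun z => by
    rw [hφdef, mul_comm, div_mul_cancel₀ _ (hun z)]
  have hψfun : ψ = fun z => u z * φ z := funext hψz
  have hφper : per φ := by
    intro x j
    simp only [hφdef, hψper x j, huper x j]
  set w : EuclideanSpace ℝ (Fin n) → ℝ := fun z => u z * φ z ^ 2 with hwdef
  have hw1 : ContDiff ℝ 1 w := hu1.mul (hφ1.pow 2)
  have hwd : Differentiable ℝ w := hw1.differentiable one_ne_zero
  have hwper : per w := by
    intro x j
    simp only [hwdef, huper x j, hφper x j]
  -- first derivatives via product rule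
  have hdψ : ∀ z v, fderiv ℝ ψ z v = u z * fderiv ℝ φ z v + φ z * fderiv ℝ u z v := by
    intro z v
    conv_lhs => rw [hψfun]
    exact fderiv_mul_apply' (hud z) (hφd z)
  have hφsq : (fun z => φ z ^ 2) = fun z => φ z * φ z := by
    funext z; ring
  have hdw : ∀ z v, fderiv ℝ w z v
      = u z * (2 * φ z * fderiv ℝ φ z v) + φ z ^ 2 * fderiv ℝ u z v := by
    intro z v
    have h1 : fderiv ℝ (fun z => φ z ^ 2) z v = 2 * φ z * fderiv ℝ φ z v := by
      rw [hφsq, fderiv_mul_apply' (hφd z) (hφd z)]; ring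
    have h2 : fderiv ℝ w z v
        = u z * fderiv ℝ (fun z => φ z ^ 2) z v + φ z ^ 2 * fderiv ℝ u z v := by
      rw [hwdef]
      exact fderiv_mul_apply' (hud z) ((hφd z).pow 2)
    rw [h2, h1]
  -- second-derivative functions
  have hDf : ∀ (f : EuclideanSpace ℝ (Fin n) → ℝ), ContDiff ℝ 2 f → ∀ i : Fin n,
      ContDiff ℝ 1 (fun z => fderiv ℝ f z (eVec n i)) := by
    intro f hf i
    exact (hf.fderiv_right (by norm_num)).clm_apply contDiff_const
  have hDψ : ∀ i : Fin n, ContDiff ℝ 1 (fun z => fderiv ℝ ψ z (eVec n i)) := hDf ψ hψ2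
  have hDu : ∀ i : Fin n, ContDiff ℝ 1 (fun z => fderiv ℝ u z (eVec n i)) := hDf u hu2
  -- the divergence-form vector field
  have hG1 : ∀ i : Fin n, ContDiff ℝ 1
      (fun z => ψ z * fderiv ℝ ψ z (eVec n i) - w z * fderiv ℝ u z (eVec n i)) :=
    fun i => (hψ1.mul (hDψ i)).sub (hw1.mul (hDu i))
  have hGper : ∀ i : Fin n, per
      (fun z => ψ z * fderiv ℝ ψ z (eVec n i) - w z * fderiv ℝ u z (eVec n i)) := by
    intro i x j
    simp only [hψper x j, hwper x j, fderiv_translate ψ hψd hψper x j,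
      fderiv_translate u hud huper x j]
  have hG0 : ∀ i : Fin n,
      ∫ x in Qd n, fderiv ℝ
        (fun z => ψ z * fderiv ℝ ψ z (eVec n i) - w z * fderiv ℝ u z (eVec n i)) x (eVec n i) = 0 :=
    fun i => myTorusDiv _ (hG1 i) (hGper i) i
  -- pointwise value of the divergence terms
  have hGival : ∀ (i : Fin n) (x : EuclideanSpace ℝ (Fin n)),
      fderiv ℝ (fun z => ψ z * fderiv ℝ ψ z (eVec n i) - w z * fderiv ℝ u z (eVec n i)) x (eVec n i)
      = u x ^ 2 * (fderiv ℝ φ x (eVec n i)) ^ 2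
        + ψ x * fderiv ℝ (fun y => fderiv ℝ ψ y (eVec n i)) x (eVec n i)
        - w x * fderiv ℝ (fun y => fderiv ℝ u y (eVec n i)) x (eVec n i) := by
    intro i x
    have hsub : fderiv ℝ
        (fun z => ψ z * fderiv ℝ ψ z (eVec n i) - w z * fderiv ℝ u z (eVec n i)) x
        = fderiv ℝ (fun z => ψ z * fderiv ℝ ψ z (eVec n i)) x
          - fderiv ℝ (fun z => w z * fderiv ℝ u z (eVec n i)) x := by
      exact fderiv_sub ((hψd x).mul (((hDψ i).differentiable one_ne_zero) x))
        ((hwd x).mul (((hDu i).differentiable one_ne_zero) x))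
    rw [hsub, ContinuousLinearMap.sub_apply,
      fderiv_mul_apply' (hψd x) (((hDψ i).differentiable one_ne_zero) x),
      fderiv_mul_apply' (hwd x) (((hDu i).differentiable one_ne_zero) x)]
    rw [hdψ x (eVec n i), hdw x (eVec n i)]
    have hwx : w x = u x * φ x ^ 2 := rfl
    rw [hwx]
    ring
  -- pointwise identity
  have hlapψ : ∀ x, lap ψ x = V x * ψ x - lam * ψ x := fun x => by
    have := hψ x; linarith
  have hlapu : ∀ x, lap u x = V x * u x - 1 := fun x => by
    have := hu x; linarith
  have hpoint : ∀ x : EuclideanSpace ℝ (Fin n),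
      (u x ^ 2 * ∑ i, (fderiv ℝ φ x (eVec n i)) ^ 2) + (1 / u x) * (ψ x) ^ 2 - lam * (ψ x) ^ 2
      = ∑ i, fderiv ℝ
          (fun z => ψ z * fderiv ℝ ψ z (eVec n i) - w z * fderiv ℝ u z (eVec n i)) x (eVec n i) := by
    intro x
    have hsum : ∑ i, fderiv ℝ
        (fun z => ψ z * fderiv ℝ ψ z (eVec n i) - w z * fderiv ℝ u z (eVec n i)) x (eVec n i)
        = u x ^ 2 * (∑ i, (fderiv ℝ φ x (eVec n i)) ^ 2)
          + ψ x * lap ψ x - w x * lap u x := by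
      rw [Finset.sum_congr rfl fun i _ => hGival i x]
      rw [lap, lap, Finset.sum_sub_distrib, Finset.sum_add_distrib, ← Finset.mul_sum,
        ← Finset.mul_sum, ← Finset.mul_sum]
    rw [hsum, hlapψ x, hlapu x]
    have hwx : w x = u x * φ x ^ 2 := rfl
    rw [hwx, hψz x]
    have hx := hun x
    field_simp
    ring
  -- integrability
  have hK : IsCompact ((fun y => (PiLp.continuousLinearEquiv 2 ℝ (fun _ : Fin n => ℝ)).symm y) ''
      (Set.univ.pi fun _ => Set.Icc (0:ℝ) 1)) :=
    (isCompact_univ_pi fun _ => isCompact_Icc).image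
      (PiLp.continuousLinearEquiv 2 ℝ (fun _ : Fin n => ℝ)).symm.continuous
  have hQsub : Qd n ⊆ (fun y => (PiLp.continuousLinearEquiv 2 ℝ (fun _ : Fin n => ℝ)).symm y) ''
      (Set.univ.pi fun _ => Set.Icc (0:ℝ) 1) := by
    intro x hx
    refine ⟨(PiLp.continuousLinearEquiv 2 ℝ (fun _ : Fin n => ℝ)) x, ?_, rfl⟩
    intro j _
    exact Set.Ico_subset_Icc_self (hx j)
  have hint : ∀ f : EuclideanSpace ℝ (Fin n) → ℝ, Continuous f → IntegrableOn f (Qd n) := by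
    intro f hf
    exact (hf.continuousOn.integrableOn_compact hK).mono_set hQsub
  have hcdφ : Continuous fun x => fderiv ℝ φ x := hφ2.continuous_fderiv two_ne_zero
  have hintA : IntegrableOn (fun x => u x ^ 2 * ∑ i, (fderiv ℝ φ x (eVec n i)) ^ 2) (Qd n) :=
    hint _ ((hu1.continuous.pow 2).mul (continuous_finset_sum _ fun i _ =>
      (hcdφ.clm_apply continuous_const).pow 2))
  have hintB : IntegrableOn (fun x => (1 / u x) * (ψ x) ^ 2) (Qd n) :=
    hint _ ((continuous_const.div hu1.continuous hun).mul (hψ1.continuous.pow 2))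
  have hintC : IntegrableOn (fun x => lam * (ψ x) ^ 2) (Qd n) :=
    hint _ (continuous_const.mul (hψ1.continuous.pow 2))
  have hintG : ∀ i : Fin n, IntegrableOn (fun x => fderiv ℝ
      (fun z => ψ z * fderiv ℝ ψ z (eVec n i) - w z * fderiv ℝ u z (eVec n i)) x (eVec n i)) (Qd n) :=
    fun i => hint _ (((hG1 i).continuous_fderiv one_ne_zero).clm_apply continuous_const)
  -- combine
  have hzero : ∫ x in Qd n,
      ((u x ^ 2 * ∑ i, (fderiv ℝ φ x (eVec n i)) ^ 2) + (1 / u x) * (ψ x) ^ 2 - lam * (ψ x) ^ 2) = 0 := by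
    rw [show (fun x => (u x ^ 2 * ∑ i, (fderiv ℝ φ x (eVec n i)) ^ 2)
        + (1 / u x) * (ψ x) ^ 2 - lam * (ψ x) ^ 2)
      = fun x => ∑ i, fderiv ℝ
          (fun z => ψ z * fderiv ℝ ψ z (eVec n i) - w z * fderiv ℝ u z (eVec n i)) x (eVec n i)
      from funext hpoint]
    rw [integral_finset_sum _ fun i _ => hintG i]
    simp only [hG0, Finset.sum_const_zero]
  have e1 : ∫ x in Qd n,
      ((u x ^ 2 * ∑ i, (fderiv ℝ φ x (eVec n i)) ^ 2) + (1 / u x) * (ψ x) ^ 2 - lam * (ψ x) ^ 2)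
      = (∫ x in Qd n, ((u x ^ 2 * ∑ i, (fderiv ℝ φ x (eVec n i)) ^ 2) + (1 / u x) * (ψ x) ^ 2))
        - ∫ x in Qd n, lam * (ψ x) ^ 2 :=
    integral_sub (hintA.add hintB) hintC
  have e2 : ∫ x in Qd n,
      ((u x ^ 2 * ∑ i, (fderiv ℝ φ x (eVec n i)) ^ 2) + (1 / u x) * (ψ x) ^ 2)
      = (∫ x in Qd n, u x ^ 2 * ∑ i, (fderiv ℝ φ x (eVec n i)) ^ 2)
        + ∫ x in Qd n, (1 / u x) * (ψ x) ^ 2 :=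
    integral_add hintA hintB
  have hC : (∫ x in Qd n, lam * (ψ x) ^ 2) = lam := by
    rw [integral_const_mul, hnorm, mul_one]
  rw [e1, e2, hC] at hzero
  linarith
end
end

section
/- Let u be the landscape function for H = -Δ + V on the torus Ω, and suppose ψ ∈ H^1 ∩ L^∞ is an eigenfunction with eigenvalue λ and ‖ψ‖_{L^∞} = 1/λ (with λ > 0). Then |ψ(x)| ≤ u(x) pointwise a.e., hence ‖ψ‖_{L^2} ≤ ‖u‖_{L^2}. -/
open MeasureTheory

noncomputable section

open Filter Topology

namespace LandscapeAux

lemma deriv2_nonpos_of_isLocalMax {h : ℝ → ℝ} (hh : ContDiff ℝ 2 h) (hmax : IsLocalMax h 0) :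
    deriv (deriv h) 0 ≤ 0 := by
  by_contra hc
  push_neg at hc
  have hd1 : ContDiff ℝ 1 (deriv h) :=
    ((contDiff_succ_iff_deriv (n := 1)).mp (by exact_mod_cast hh)).2.2
  have hzero : deriv h 0 = 0 := hmax.deriv_eq_zero
  have hD : HasDerivAt (deriv h) (deriv (deriv h) 0) 0 :=
    ((hd1.differentiable one_ne_zero) 0).hasDerivAt
  have hslope := hasDerivAt_iff_tendsto_slope.mp hD
  have hpos : ∀ᶠ t in 𝓝[>] (0:ℝ), 0 < deriv h t := by
    have h1 : ∀ᶠ t in 𝓝[≠] (0:ℝ), 0 < slope (deriv h) 0 t :=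
      hslope.eventually (eventually_gt_nhds hc)
    have h2 : ∀ᶠ t in 𝓝[>] (0:ℝ), 0 < slope (deriv h) 0 t :=
      h1.filter_mono (nhdsWithin_mono _ (fun t ht => ne_of_gt ht))
    filter_upwards [h2, self_mem_nhdsWithin] with t ht ht'
    have hs : slope (deriv h) 0 t = t⁻¹ * deriv h t := by simp [slope, hzero]
    rw [hs] at ht
    have h3 : 0 < t * (t⁻¹ * deriv h t) := mul_pos ht' ht
    rwa [mul_inv_cancel_left₀ (ne_of_gt ht')] at h3
  rcases mem_nhdsGT_iff_exists_Ioo_subset.mp hpos with ⟨δ, hδmem, hδ⟩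
  rcases Metric.eventually_nhds_iff.mp hmax with ⟨ε, hε, hball⟩
  have hδpos : (0:ℝ) < δ := by simpa using hδmem
  set t := min δ ε / 2 with ht_def
  have htpos : 0 < t := by positivity
  have htδ : t < δ := by
    have h5 : t ≤ δ / 2 := by
      rw [ht_def]; apply div_le_div_of_nonneg_right (min_le_left _ _); norm_num
    linarith
  have htε : t < ε := by
    have h5 : t ≤ ε / 2 := by
      rw [ht_def]; apply div_le_div_of_nonneg_right (min_le_right _ _); norm_num
    linarith
  have hcont : ContinuousOn h (Set.Icc 0 t) := (hh.continuous).continuousOn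
  have hdiff : DifferentiableOn ℝ h (Set.Ioo 0 t) :=
    (hh.differentiable two_ne_zero).differentiableOn
  obtain ⟨ξ, hξ, hξd⟩ := exists_deriv_eq_slope h htpos hcont hdiff
  have hd : 0 < deriv h ξ := hδ ⟨hξ.1, hξ.2.trans htδ⟩
  rw [hξd] at hd
  have hle : h t ≤ h 0 := hball (by simpa [Real.dist_eq, abs_of_pos htpos] using htε)
  have h6 : 0 < (h t - h 0) / (t - 0) := hd
  have h4 : 0 < h t - h 0 := by
    have h7 := mul_pos htpos h6
    rw [sub_zero] at h7
    rwa [mul_div_cancel₀ _ (ne_of_gt htpos)] at h7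
  linarith

variable {n : ℕ}
local notation "E" => EuclideanSpace ℝ (Fin n)

lemma line_hasDerivAt (x e : E) (t : ℝ) : HasDerivAt (fun s : ℝ => x + s • e) e t := by
  simpa using ((hasDerivAt_id t).smul_const e).const_add x

lemma slice_deriv {f : E → ℝ} (hf : Differentiable ℝ f) (x e : E) (t : ℝ) :
    deriv (fun s : ℝ => f (x + s • e)) t = fderiv ℝ f (x + t • e) e :=
  (((hf (x + t • e)).hasFDerivAt).comp_hasDerivAt t (line_hasDerivAt x e t)).deriv

lemma slice_deriv2 {f : E → ℝ} (hf : ContDiff ℝ 2 f) (x e : E) :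
    deriv (deriv (fun s : ℝ => f (x + s • e))) 0 = fderiv ℝ (fun y => fderiv ℝ f y e) x e := by
  have hdf : Differentiable ℝ f := hf.differentiable two_ne_zero
  have h1 : deriv (fun s : ℝ => f (x + s • e)) = fun t => (fun y => fderiv ℝ f y e) (x + t • e) := by
    funext t; exact slice_deriv hdf x e t
  have hG : Differentiable ℝ (fun y : E => fderiv ℝ f y e) := by
    have h2 : ContDiff ℝ 1 (fderiv ℝ f) := (contDiff_succ_iff_fderiv.mp (by exact_mod_cast hf)).2.2
    exact fun y => ((h2.differentiable one_ne_zero) y).clm_apply (differentiableAt_const e)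
  rw [h1]
  have hx : x + (0:ℝ) • e = x := by simp
  have hF : HasFDerivAt (fun y : E => fderiv ℝ f y e) (fderiv ℝ (fun y => fderiv ℝ f y e) x)
      (x + (0:ℝ) • e) := by rw [hx]; exact (hG x).hasFDerivAt
  have := (hF.comp_hasDerivAt 0 (line_hasDerivAt x e 0)).deriv
  simpa [Function.comp_def] using this

lemma per_int {f : E → ℝ} (hf : per f) (x : E) (m : ℤ) (i : Fin n) :
    f (x + (m : ℝ) • eVec n i) = f x := by
  induction m using Int.induction_on with
  | zero => simp
  | succ k ih =>
      have h2 : x + (((k:ℤ)+1 : ℤ) : ℝ) • eVec n i = (x + ((k:ℤ) : ℝ) • eVec n i) + eVec n i := by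
        push_cast; module
      rw [h2, hf]; exact ih
  | pred k ih =>
      have h2 : (x + ((-(k:ℤ)-1 : ℤ) : ℝ) • eVec n i) + eVec n i
          = x + ((-(k:ℤ) : ℤ) : ℝ) • eVec n i := by push_cast; module
      rw [← hf (x + ((-(k:ℤ)-1 : ℤ) : ℝ) • eVec n i) i, h2]; exact ih

lemma per_intsum {f : E → ℝ} (hf : per f) (x : E) (c : Fin n → ℤ) :
    f (x + ∑ i, (c i : ℝ) • eVec n i) = f x := by
  classical
  have key : ∀ s : Finset (Fin n), f (x + ∑ i ∈ s, (c i : ℝ) • eVec n i) = f x := by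
    intro s
    induction s using Finset.induction_on with
    | empty => simp
    | insert _ _ hj ih =>
        rename_i j s'
        rw [Finset.sum_insert hj]
        have h3 : x + ((c j : ℝ) • eVec n j + ∑ i ∈ s', (c i : ℝ) • eVec n i)
            = (x + ∑ i ∈ s', (c i : ℝ) • eVec n i) + (c j : ℝ) • eVec n j := by module
        rw [h3, per_int hf _ _ _, ih]
  exact key Finset.univ

lemma reduce (x : E) : ∃ y ∈ Qd n, ∀ f : E → ℝ, per f → f y = f x := by
  refine ⟨x + ∑ i, ((-⌊x i⌋ : ℤ) : ℝ) • eVec n i, ?_, fun f hf => per_intsum hf x _⟩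
  intro i
  have happ : (x + ∑ j, ((-⌊x j⌋ : ℤ) : ℝ) • eVec n j) i = x i - ⌊x i⌋ := by
    simp only [PiLp.add_apply, PiLp.smul_apply, smul_eq_mul]
    rw [show (∑ j, ((-⌊x j⌋ : ℤ) : ℝ) • eVec n j) i = ∑ j, (((-⌊x j⌋ : ℤ) : ℝ) • eVec n j) i
      from by rw [WithLp.ofLp_sum]; exact Finset.sum_apply i Finset.univ _]
    simp [eVec, EuclideanSpace.single_apply]
    exact Int.self_sub_floor (x i)
  rw [happ]
  constructor
  · exact sub_nonneg.mpr (Int.floor_le _)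
  · have := Int.lt_floor_add_one (x i); linarith

lemma cube_compact : IsCompact {x : E | ∀ i, x i ∈ Set.Icc (0:ℝ) 1} := by
  have hclosed : IsClosed {x : E | ∀ i, x i ∈ Set.Icc (0:ℝ) 1} := by
    have h1 : {x : E | ∀ i, x i ∈ Set.Icc (0:ℝ) 1} = ⋂ i, (fun x : E => x i) ⁻¹' Set.Icc (0:ℝ) 1 := by
      ext x; simp
    rw [h1]
    exact isClosed_iInter fun i =>
      IsClosed.preimage (continuous_apply i |>.comp (PiLp.continuous_ofLp (p := 2) ..)) isClosed_Icc
  have hsub : {x : E | ∀ i, x i ∈ Set.Icc (0:ℝ) 1} ⊆ Metric.closedBall 0 (Real.sqrt n) := by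
    intro x hx
    rw [Metric.mem_closedBall, dist_zero_right, EuclideanSpace.norm_eq]
    apply Real.sqrt_le_sqrt
    calc ∑ i, ‖x i‖ ^ 2 ≤ ∑ _i : Fin n, (1:ℝ) := by
          apply Finset.sum_le_sum
          intro i _
          have h2 := hx i
          rw [Real.norm_eq_abs, abs_of_nonneg h2.1]
          nlinarith [h2.1, h2.2]
      _ = n := by simp
  exact (isCompact_closedBall 0 _).of_isClosed_subset hclosed hsub

lemma deriv2_mul {f h : ℝ → ℝ} (hf : ContDiff ℝ 2 f) (hh : ContDiff ℝ 2 h) :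
    deriv (deriv (fun t => f t * h t)) 0
      = deriv (deriv f) 0 * h 0 + 2 * deriv f 0 * deriv h 0 + f 0 * deriv (deriv h) 0 := by
  have hfd : Differentiable ℝ f := hf.differentiable two_ne_zero
  have hhd : Differentiable ℝ h := hh.differentiable two_ne_zero
  have hfd' : Differentiable ℝ (deriv f) :=
    (((contDiff_succ_iff_deriv (n := 1)).mp (by exact_mod_cast hf)).2.2).differentiable one_ne_zero
  have hhd' : Differentiable ℝ (deriv h) :=
    (((contDiff_succ_iff_deriv (n := 1)).mp (by exact_mod_cast hh)).2.2).differentiable one_ne_zero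
  have h1 : deriv (fun t => f t * h t) = fun t => deriv f t * h t + f t * deriv h t := by
    funext t; exact deriv_mul (hfd t) (hhd t)
  rw [h1, deriv_fun_add (f := fun t => deriv f t * h t) (g := fun t => f t * deriv h t) ((hfd' 0).mul (hhd 0)) ((hfd 0).mul (hhd' 0)),
    deriv_fun_mul (hfd' 0) (hhd 0), deriv_fun_mul (hfd 0) (hhd' 0)]
  ring

lemma key (V u ψ : E → ℝ) (lam : ℝ)
    (hu2 : ContDiff ℝ 2 u) (hupos : ∀ x, 0 < u x)
    (hu : ∀ x, -lap u x + V x * u x = 1)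
    (hψ2 : ContDiff ℝ 2 ψ) (hψper : per ψ)
    (hψ : ∀ x, -lap ψ x + V x * ψ x = lam * ψ x)
    (huper : per u)
    (hlam : 0 < lam) (hbound : ∀ y, ψ y ≤ 1/lam) : ∀ x, ψ x ≤ u x := by
  classical
  set v : E → ℝ := fun y => ψ y / u y with hv_def
  have hv2 : ContDiff ℝ 2 v := hψ2.div hu2 (fun y => ne_of_gt (hupos y))
  have hvper : per v := fun x i => by simp only [hv_def, hψper x i, huper x i]
  have hK0 : (0 : E) ∈ {x : E | ∀ i, x i ∈ Set.Icc (0:ℝ) 1} := by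
    intro i; constructor <;> norm_num
  obtain ⟨x₀, hx₀K, hmax⟩ := cube_compact.exists_isMaxOn ⟨0, hK0⟩
    (hv2.continuous.continuousOn)
  have hglob : ∀ x, v x ≤ v x₀ := by
    intro x
    obtain ⟨y, hy, hval⟩ := reduce x
    rw [← hval v hvper]
    exact hmax (fun i => ⟨(hy i).1, le_of_lt (hy i).2⟩)
  suffices hv1 : v x₀ ≤ 1 by
    intro x
    have := (hglob x).trans hv1
    exact (div_le_one (hupos x)).mp this
  by_contra hgt
  push_neg at hgt
  have main : ∀ i, ∃ S : ℝ, S ≤ 0 ∧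
      fderiv ℝ (fun y => fderiv ℝ ψ y (eVec n i)) x₀ (eVec n i)
        = fderiv ℝ (fun y => fderiv ℝ u y (eVec n i)) x₀ (eVec n i) * v x₀ + u x₀ * S := by
    intro i
    set e := eVec n i with he
    have hline : ContDiff ℝ 2 (fun t : ℝ => x₀ + t • e) :=
      contDiff_const.add (contDiff_id.smul contDiff_const)
    set f : ℝ → ℝ := fun t => u (x₀ + t • e) with hf_def
    set g : ℝ → ℝ := fun t => ψ (x₀ + t • e) with hg_def
    set h : ℝ → ℝ := fun t => v (x₀ + t • e) with hh_def
    have hf2 : ContDiff ℝ 2 f := hu2.comp hline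
    have hg2 : ContDiff ℝ 2 g := hψ2.comp hline
    have hh2 : ContDiff ℝ 2 h := hv2.comp hline
    have hmaxh : IsLocalMax h 0 := Filter.Eventually.of_forall fun t => by
      simp only [hh_def]
      have h4 : v (x₀ + (0:ℝ) • e) = v x₀ := by norm_num
      rw [h4]; exact hglob _
    have hd0 : deriv h 0 = 0 := hmaxh.deriv_eq_zero
    have hS : deriv (deriv h) 0 ≤ 0 := deriv2_nonpos_of_isLocalMax hh2 hmaxh
    have hgfh : g = fun t => f t * h t := by
      funext t
      simp only [hg_def, hf_def, hh_def, hv_def]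
      rw [mul_div_cancel₀]
      exact ne_of_gt (hupos _)
    have hprod : deriv (deriv g) 0
        = deriv (deriv f) 0 * h 0 + f 0 * deriv (deriv h) 0 := by
      rw [hgfh, deriv2_mul hf2 hh2, hd0]; ring
    refine ⟨deriv (deriv h) 0, hS, ?_⟩
    have hψs := slice_deriv2 hψ2 x₀ e
    have hus := slice_deriv2 hu2 x₀ e
    rw [← hψs, ← hus]
    have hh0 : h 0 = v x₀ := by simp only [hh_def]; norm_num
    have hf0 : f 0 = u x₀ := by simp only [hf_def]; norm_num
    rw [show deriv (deriv (fun s : ℝ => ψ (x₀ + s • e))) 0 = deriv (deriv g) 0 from rfl,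
      show deriv (deriv (fun s : ℝ => u (x₀ + s • e))) 0 = deriv (deriv f) 0 from rfl,
      hprod, hh0, hf0]
  choose S hS hEq using main
  have hlapψ : lap ψ x₀ = lap u x₀ * v x₀ + u x₀ * ∑ i, S i := by
    simp only [lap]
    rw [Finset.sum_congr rfl (fun i _ => hEq i), Finset.sum_add_distrib,
      ← Finset.sum_mul, ← Finset.mul_sum]
  have hSsum : (∑ i, S i) ≤ 0 := Finset.sum_nonpos (fun i _ => hS i)
  have e1 := hψ x₀
  have e2 := hu x₀
  have hψv : ψ x₀ = v x₀ * u x₀ := by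
    simp only [hv_def]; rw [div_mul_cancel₀]; exact ne_of_gt (hupos x₀)
  have hb : lam * ψ x₀ ≤ 1 := by
    have h8 := hbound x₀
    rw [le_div_iff₀ hlam] at h8
    linarith [h8]
  have hid : u x₀ * (∑ i, S i) = v x₀ * (1 - lam * u x₀) := by
    linear_combination (-1 : ℝ) * e1 + v x₀ * e2 - hlapψ + (V x₀ - lam) * hψv
  have h2 : v x₀ * (1 - lam * u x₀) ≤ 0 := by
    rw [← hid]
    exact mul_nonpos_of_nonneg_of_nonpos (le_of_lt (hupos x₀)) hSsum
  have h3 : 1 - lam * u x₀ ≤ 0 := by nlinarith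
  rw [hψv] at hb
  nlinarith [mul_pos (mul_pos hlam (hupos x₀)) (sub_pos.mpr hgt)]

lemma lap_neg (ψ : E → ℝ) (x : E) : lap (fun y => -ψ y) x = - lap ψ x := by
  simp only [lap, ← Finset.sum_neg_distrib]
  apply Finset.sum_congr rfl
  intro i _
  have h1 : (fun y : E => fderiv ℝ (fun z => -ψ z) y (eVec n i))
      = fun y => -(fderiv ℝ ψ y (eVec n i)) := by
    funext y
    rw [fderiv_fun_neg]
    simp
  rw [h1]
  have h2 : (fun y : E => -(fderiv ℝ ψ y (eVec n i)))
      = fun y => -((fun z => fderiv ℝ ψ z (eVec n i)) y) := rfl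
  rw [h2, fderiv_fun_neg]
  simp

end LandscapeAux

open LandscapeAux in
/-- if `‖ψ‖_∞ = 1/λ` then `|ψ| ≤ u` a.e. and `‖ψ‖_{L²} ≤ ‖u‖_{L²}`. -/
theorem landscape_domination (n : ℕ)
    (V u ψ : EuclideanSpace ℝ (Fin n) → ℝ) (lam : ℝ)
    (hVmeas : Measurable V) (hVbdd : ∃ M, ∀ x, |V x| ≤ M)
    (hVnonneg : ∀ x, 0 ≤ V x) (hVper : per V)
    (hVpos : 0 < volume {x | x ∈ Qd n ∧ 0 < V x})
    (hu2 : ContDiff ℝ 2 u) (huper : per u) (hupos : ∀ x, 0 < u x)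
    (hu : ∀ x, -lap u x + V x * u x = 1)
    (hψ2 : ContDiff ℝ 2 ψ) (hψper : per ψ)
    (hψ : ∀ x, -lap ψ x + V x * ψ x = lam * ψ x)
    (hlam : 0 < lam)
    (hsup : (⨆ y, |ψ y|) = 1 / lam) :
    (∀ᵐ x ∂(volume : Measure (EuclideanSpace ℝ (Fin n))), |ψ x| ≤ u x)
      ∧ (∫ x in Qd n, (ψ x)^2) ≤ ∫ x in Qd n, (u x)^2 := by
  classical
  -- |ψ| is bounded above by 1/lam
  have habsper : per (fun y => |ψ y|) := fun x i => by simp [hψper x i]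
  have hbddK := cube_compact.exists_isMaxOn
    (⟨0, fun i => by constructor <;> norm_num⟩ :
      Set.Nonempty {x : EuclideanSpace ℝ (Fin n) | ∀ i, x i ∈ Set.Icc (0:ℝ) 1})
    ((hψ2.continuous.abs).continuousOn)
  obtain ⟨z₀, hz₀, hzmax⟩ := hbddK
  have hBdd : BddAbove (Set.range fun y => |ψ y|) := by
    refine ⟨|ψ z₀|, ?_⟩
    rintro r ⟨y, rfl⟩
    obtain ⟨w, hw, hval⟩ := reduce y
    show |ψ y| ≤ |ψ z₀|
    rw [show |ψ y| = |ψ w| from (hval (fun y => |ψ y|) habsper).symm]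
    exact hzmax (fun i => ⟨(hw i).1, le_of_lt (hw i).2⟩)
  have hbound : ∀ y, |ψ y| ≤ 1 / lam := by
    intro y
    rw [← hsup]
    exact le_ciSup hBdd y
  -- pointwise domination everywhere
  have hpoint : ∀ x, |ψ x| ≤ u x := by
    have h1 : ∀ x, ψ x ≤ u x :=
      key V u ψ lam hu2 hupos hu hψ2 hψper hψ huper hlam
        (fun y => (le_abs_self _).trans (hbound y))
    have h2 : ∀ x, -ψ x ≤ u x := by
      have hψn : ∀ x, -lap (fun y => -ψ y) x + V x * (-ψ x) = lam * (-ψ x) := by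
        intro x
        rw [lap_neg]
        have := hψ x
        ring_nf
        ring_nf at this
        linarith
      exact key V u (fun y => -ψ y) lam hu2 hupos hu hψ2.neg
        (fun x i => by simp [hψper x i]) hψn huper hlam
        (fun y => (neg_le_abs _).trans (hbound y))
    intro x
    rw [abs_le]
    exact ⟨by linarith [h2 x], h1 x⟩
  constructor
  · exact Filter.Eventually.of_forall hpoint
  · have hQdK : Qd n ⊆ {x : EuclideanSpace ℝ (Fin n) | ∀ i, x i ∈ Set.Icc (0:ℝ) 1} :=
      fun x hx i => ⟨(hx i).1, le_of_lt (hx i).2⟩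
    have hQdmeas : MeasurableSet (Qd n) := by
      have h1 : Qd n = ⋂ i, (fun x : EuclideanSpace ℝ (Fin n) => x i) ⁻¹' Set.Ico (0:ℝ) 1 := by
        ext x; simp [Qd]
      rw [h1]
      exact MeasurableSet.iInter fun i =>
        ((continuous_apply i).comp (PiLp.continuous_ofLp (p := 2) ..)).measurable measurableSet_Ico
    have hIu : IntegrableOn (fun x => (u x)^2) (Qd n) volume :=
      (((hu2.continuous.pow 2).continuousOn).integrableOn_compact cube_compact).mono_set hQdK
    have hIψ : IntegrableOn (fun x => (ψ x)^2) (Qd n) volume :=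
      (((hψ2.continuous.pow 2).continuousOn).integrableOn_compact cube_compact).mono_set hQdK
    apply setIntegral_mono_on hIψ hIu hQdmeas
    intro x _
    have := hpoint x
    have h0 : 0 ≤ u x := le_of_lt (hupos x)
    rw [abs_le] at this
    exact sq_le_sq' this.1 this.2
end
end
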